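/- arXiv:1511.09449 — 2 statements merged into one kernel-verified Lean document; each statement's English description precedes it below -/
import Mathlib

section
/- Let K ≥ 2 be an integer, let q_1, …, q_K be positive real numbers, and let β > 0 satisfy q_1^{1/β} + q_2^{1/β} + ⋯ + q_K^{1/β} = 1. Then (1/K) ∑_{i=1}^K ln q_i / ln K ≤ −β; equivalently, the average of the radix-K logarithms of the q_i is at most −β. -/
/-- If `β > 0` satisfies `∑ i, (q i) ^ (1/β) = 1` for positive `q i`, then the average
radix-`K` logarithm of the letter probabilities, `(1/(K ln K)) ∑ i, ln (q i)`, is at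
most `-β`. -/
theorem avg_logK_le_neg_beta (K : ℕ) (hK : 2 ≤ K) (q : Fin K → ℝ) (hq : ∀ i, 0 < q i)
    (β : ℝ) (hβ : 0 < β) (heq : ∑ i, (q i) ^ (1 / β : ℝ) = 1) :
    (1 / (K * Real.log K) : ℝ) * ∑ i, Real.log (q i) ≤ -β := by
  have hK1 : (1 : ℝ) < K := by exact_mod_cast lt_of_lt_of_le one_lt_two hK
  have hK0 : (0 : ℝ) < K := lt_trans one_pos hK1
  have hlogK : 0 < Real.log K := Real.log_pos hK1
  set p : Fin K → ℝ := fun i => (q i) ^ (1 / β : ℝ) with hp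
  have hp0 : ∀ i, 0 < p i := fun i => Real.rpow_pos_of_pos (hq i) _
  -- key sum inequality
  have hkey : ∑ i, Real.log (p i) ≤ -(K * Real.log K) := by
    have h1 : ∀ i, Real.log K + Real.log (p i) ≤ K * p i - 1 := by
      intro i
      have := Real.log_le_sub_one_of_pos (mul_pos hK0 (hp0 i))
      rwa [Real.log_mul (ne_of_gt hK0) (ne_of_gt (hp0 i))] at this
    have hsum : ∑ i, (Real.log (K:ℝ) + Real.log (p i)) ≤ ∑ i, ((K:ℝ) * p i - 1) := Finset.sum_le_sum (fun i _ => h1 i)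
    simp only [Finset.sum_add_distrib, Finset.sum_sub_distrib, ← Finset.mul_sum,
      Finset.sum_const, Finset.card_univ, Fintype.card_fin, nsmul_eq_mul] at hsum
    rw [heq] at hsum
    linarith
  have hlogq : ∀ i, Real.log (q i) = β * Real.log (p i) := by
    intro i
    rw [hp]
    rw [Real.log_rpow (hq i)]
    field_simp
  have hsumq : ∑ i, Real.log (q i) = β * ∑ i, Real.log (p i) := by
    rw [Finset.mul_sum]; exact Finset.sum_congr rfl fun i _ => hlogq i
  rw [hsumq]
  have hKlog : 0 < (K : ℝ) * Real.log K := mul_pos hK0 hlogK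
  rw [div_mul_eq_mul_div, one_mul, div_le_iff₀ hKlog]
  have : β * ∑ i, Real.log (p i) ≤ β * -(K * Real.log K) :=
    mul_le_mul_of_nonneg_left hkey (le_of_lt hβ)
  linarith
end

section
/- Let 0 < s < 1 and for each integer K ≥ 2 let q_{K,1}, …, q_{K,K} be positive real numbers with ∑_{i=1}^K q_{K,i} = 1 − s, and let β_K > 1 be the unique solution of ∑_{i=1}^K q_{K,i}^{1/β_K} = 1. If m̄_K = (1/(K ln K)) ∑_{i=1}^K ln q_{K,i} converges to −1 as K → ∞, then β_K → 1 as K → ∞. -/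
/-- If for each `K ≥ 2` the positive letter probabilities `q K i` sum to `1 - s` and
`β K > 1` solves `∑ i, (q K i) ^ (1 / β K) = 1`, and if the average radix-`K` logarithm
`(1/(K ln K)) ∑ i, ln (q K i)` tends to `-1`, then `β K → 1` as `K → ∞`. -/
theorem beta_tendsto_one_of_avg_logK (s : ℝ) (hs0 : 0 < s) (hs1 : s < 1)
    (q : (K : ℕ) → Fin K → ℝ) (hq : ∀ K, 2 ≤ K → ∀ i, 0 < q K i)
    (hsum : ∀ K, 2 ≤ K → ∑ i, q K i = 1 - s)
    (β : ℕ → ℝ) (hβ : ∀ K, 2 ≤ K → 1 < β K)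
    (heq : ∀ K, 2 ≤ K → ∑ i, (q K i) ^ (1 / β K : ℝ) = 1)
    (hm : Filter.Tendsto (fun K : ℕ => (1 / (K * Real.log K) : ℝ) * ∑ i, Real.log (q K i))
      Filter.atTop (nhds (-1))) :
    Filter.Tendsto β Filter.atTop (nhds 1) := by
  have key : ∀ K, 2 ≤ K →
      β K ≤ -((1 / (K * Real.log K) : ℝ) * ∑ i, Real.log (q K i)) := by
    intro K hK
    have hK2 : (2 : ℝ) ≤ (K : ℝ) := by exact_mod_cast hK
    have hK0 : (0 : ℝ) < K := by linarith
    have hlogK : 0 < Real.log K := Real.log_pos (by linarith)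
    have hβ1 := hβ K hK
    have hβ0 : (0 : ℝ) < β K := by linarith
    -- log (K * q^(1/β)) ≤ K * q^(1/β) - 1
    have h1 : ∑ i, Real.log ((K : ℝ) * (q K i) ^ (1 / β K : ℝ)) ≤
        ∑ i, ((K : ℝ) * (q K i) ^ (1 / β K : ℝ) - 1) := by
      apply Finset.sum_le_sum
      intro i _
      exact Real.log_le_sub_one_of_pos
        (mul_pos hK0 (Real.rpow_pos_of_pos (hq K hK i) _))
    have h2 : ∑ i, ((K : ℝ) * (q K i) ^ (1 / β K : ℝ) - 1) = 0 := by
      rw [Finset.sum_sub_distrib, ← Finset.mul_sum, heq K hK]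
      simp
    have h3 : ∑ i, Real.log ((K : ℝ) * (q K i) ^ (1 / β K : ℝ)) =
        (K : ℝ) * Real.log K + (1 / β K) * ∑ i, Real.log (q K i) := by
      have : ∀ i : Fin K, Real.log ((K : ℝ) * (q K i) ^ (1 / β K : ℝ)) =
          Real.log K + (1 / β K) * Real.log (q K i) := by
        intro i
        rw [Real.log_mul (ne_of_gt hK0)
          (ne_of_gt (Real.rpow_pos_of_pos (hq K hK i) _)),
          Real.log_rpow (hq K hK i)]
      rw [Finset.sum_congr rfl (fun i _ => this i), Finset.sum_add_distrib,
        Finset.sum_const, ← Finset.mul_sum]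
      simp [mul_comm]
    have h4 : (K : ℝ) * Real.log K + (1 / β K) * ∑ i, Real.log (q K i) ≤ 0 := by
      rw [← h3]; linarith [h1, h2.le, h2.ge]
    set S := ∑ i, Real.log (q K i) with hS
    have h5 : S ≤ -(β K * ((K : ℝ) * Real.log K)) := by
      have := mul_le_mul_of_nonneg_left h4 hβ0.le
      have hb : β K * ((1 / β K) * S) = S := by field_simp
      nlinarith
    have hKL : (0 : ℝ) < (K : ℝ) * Real.log K := mul_pos hK0 hlogK
    rw [le_neg, div_mul_eq_mul_div, div_le_iff₀ hKL]
    linarith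
  have h1le : ∀ᶠ K in Filter.atTop, (1 : ℝ) ≤ β K := by
    filter_upwards [Filter.eventually_ge_atTop 2] with K hK using (hβ K hK).le
  have hle : ∀ᶠ K in Filter.atTop,
      β K ≤ -((1 / (K * Real.log K) : ℝ) * ∑ i, Real.log (q K i)) := by
    filter_upwards [Filter.eventually_ge_atTop 2] with K hK using key K hK
  have hneg : Filter.Tendsto
      (fun K : ℕ => -((1 / (K * Real.log K) : ℝ) * ∑ i, Real.log (q K i)))
      Filter.atTop (nhds 1) := by
    have := hm.neg
    simpa using this
  exact tendsto_of_tendsto_of_tendsto_of_le_of_le' tendsto_const_nhds hneg h1le hle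
end
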